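/- Let L be an ortholattice and u ∈ L; for a ≤ u write a' = aᶜ ⊓ u. Then the following are equivalent: (1) for all a, b ∈ L with a ≤ b ≤ u there is c ∈ L with c ≤ aᶜ and a ⊔ c = b; (2) the interval {a ∈ L : a ≤ u} equipped with the map a ↦ a' is an orthomodular lattice, i.e., for every a ≤ u one has a'' = a, a ⊓ a' = ⊥ and a ⊔ a' = u, the map a ↦ a' is antitone on the interval, and for all a ≤ b ≤ u there is c ≤ a' with a ⊔ c = b. -/
import Mathlib

theorem stmt_6 {L : Type*} [Lattice L] [BoundedOrder L] (oc : L → L)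
    (hanti : ∀ a b : L, a ≤ b → oc b ≤ oc a)
    (hinv : ∀ a : L, oc (oc a) = a)
    (hbot : ∀ a : L, a ⊓ oc a = ⊥)
    (htop : ∀ a : L, a ⊔ oc a = ⊤)
    (u : L) :
    (∀ a b : L, a ≤ b → b ≤ u → ∃ c : L, c ≤ oc a ∧ a ⊔ c = b) ↔
    ((∀ a : L, a ≤ u → oc (oc a ⊓ u) ⊓ u = a) ∧
     (∀ a : L, a ≤ u → a ⊓ (oc a ⊓ u) = ⊥) ∧
     (∀ a : L, a ≤ u → a ⊔ (oc a ⊓ u) = u) ∧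
     (∀ a b : L, a ≤ b → b ≤ u → oc b ⊓ u ≤ oc a ⊓ u) ∧
     (∀ a b : L, a ≤ b → b ≤ u → ∃ c : L, c ≤ oc a ⊓ u ∧ a ⊔ c = b)) := by
  constructor
  · intro h
    refine ⟨?_, ?_, ?_, ?_, ?_⟩
    · intro a ha
      have hle : a ≤ oc (oc a ⊓ u) ⊓ u := by
        refine le_inf ?_ ha
        have := hanti _ _ (inf_le_left : oc a ⊓ u ≤ oc a)
        rwa [hinv] at this
      obtain ⟨c, hc1, hc2⟩ := h a (oc (oc a ⊓ u) ⊓ u) hle inf_le_right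
      have hcb : c ≤ ⊥ := by
        have hcu : c ≤ oc (oc a ⊓ u) ⊓ u := hc2 ▸ le_sup_right
        have h1 : c ≤ oc a ⊓ u := le_inf hc1 (hcu.trans inf_le_right)
        have h2 : c ≤ oc (oc a ⊓ u) := hcu.trans inf_le_left
        calc c ≤ (oc a ⊓ u) ⊓ oc (oc a ⊓ u) := le_inf h1 h2
          _ = ⊥ := hbot _
      have : c = ⊥ := le_bot_iff.mp hcb
      rw [← hc2, this, sup_bot_eq]
    · intro a ha
      have : a ⊓ (oc a ⊓ u) ≤ a ⊓ oc a :=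
        inf_le_inf_left _ inf_le_left
      simpa [hbot a] using le_bot_iff.mp (by simpa [hbot a] using this)
    · intro a ha
      obtain ⟨c, hc1, hc2⟩ := h a u ha le_rfl
      have hcu : c ≤ u := hc2 ▸ le_sup_right
      apply le_antisymm
      · exact sup_le ha inf_le_right
      · calc u = a ⊔ c := hc2.symm
          _ ≤ a ⊔ (oc a ⊓ u) := sup_le_sup_left (le_inf hc1 hcu) a
    · intro a b hab _
      exact inf_le_inf_right _ (hanti _ _ hab)
    · intro a b hab hbu
      obtain ⟨c, hc1, hc2⟩ := h a b hab hbu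
      exact ⟨c, le_inf hc1 ((hc2 ▸ le_sup_right : c ≤ b).trans hbu), hc2⟩
  · rintro ⟨_, _, _, _, h5⟩ a b hab hbu
    obtain ⟨c, hc1, hc2⟩ := h5 a b hab hbu
    exact ⟨c, hc1.trans inf_le_left, hc2⟩
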